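/- Let q be a prime power and A an (n−1)×n matrix over F_{q^2} of rank n−1. Then the equation Ax = 0 has a nonzero solution x with all coordinates in F_q if and only if A^{(q)} and A are row equivalent, where A^{(q)} is obtained from A by raising every entry to the q-th power. -/

import Mathlib

open Matrix Module

/-- The `q`-power map is a ring hom when `card F = q^2`. -/
lemma exists_frobenius_hom (q : ℕ) (hq : IsPrimePow q) (F : Type) [Field F] [Fintype F]
    (hF : Fintype.card F = q ^ 2) : ∃ φ : F →+* F, ∀ a, φ a = a ^ q := by
  obtain ⟨p, k, hp, hk, rfl⟩ := hq
  haveI : CharP F (ringChar F) := ringChar.charP F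
  obtain ⟨m, hm, hcard⟩ := FiniteField.card F (ringChar F)
  have hpp : p.Prime := hp.nat_prime
  have heq : ringChar F = p := by
    have h1 : (ringChar F) ^ (m : ℕ) = p ^ (2 * k) := by
      rw [← hcard, hF]; ring
    have : ringChar F ∣ p ^ (2 * k) := by
      rw [← h1]; exact dvd_pow_self _ (by positivity)
    exact (Nat.prime_dvd_prime_iff_eq hm hpp).mp (hm.dvd_of_dvd_pow this)
  haveI : CharP F p := heq ▸ ringChar.charP F
  haveI : Fact p.Prime := ⟨hpp⟩
  refine ⟨⟨⟨⟨fun a => a ^ p ^ k, one_pow _⟩, fun a b => mul_pow a b _⟩,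
    zero_pow (pow_pos hpp.pos k).ne', fun a b => add_pow_char_pow ..⟩, fun a => rfl⟩

/-- A matrix has full row rank iff its left kernel is trivial. -/
lemma rank_eq_iff_leftKernel {m n : ℕ} {F : Type} [Field F] (B : Matrix (Fin m) (Fin n) F) :
    B.rank = m ↔ ∀ v : Fin m → F, Matrix.vecMul v B = 0 → v = 0 := by
  have h1 := LinearMap.finrank_range_add_finrank_ker Bᵀ.mulVecLin
  have h2 : finrank F (Fin m → F) = m := by simp
  have h3 : Bᵀ.rank = finrank F (LinearMap.range Bᵀ.mulVecLin) := rfl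
  rw [h2] at h1
  constructor
  · intro h v hv
    have hk : finrank F (LinearMap.ker Bᵀ.mulVecLin) = 0 := by
      rw [Matrix.rank_transpose, h] at h3; omega
    have : LinearMap.ker Bᵀ.mulVecLin = ⊥ := Submodule.finrank_eq_zero.mp hk
    have hv' : v ∈ LinearMap.ker Bᵀ.mulVecLin := by
      simp [LinearMap.mem_ker, Matrix.mulVecLin_apply, Matrix.mulVec_transpose, hv]
    rw [this] at hv'; simpa using hv'
  · intro h
    have : LinearMap.ker Bᵀ.mulVecLin = ⊥ := by
      rw [eq_bot_iff]
      intro v hv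
      have := h v (by rw [← Matrix.mulVec_transpose]; exact hv)
      simp [this]
    rw [this] at h1
    simp at h1
    rw [← Matrix.rank_transpose, h3, h1]

theorem kernel_vector_over_base_field_iff_row_equivalent
    (q n : ℕ) (hq : IsPrimePow q) (hn : 1 ≤ n)
    (F : Type) [Field F] [Fintype F] (hF : Fintype.card F = q ^ 2)
    (A : Matrix (Fin (n - 1)) (Fin n) F) (hrank : A.rank = n - 1) :
    (∃ x : Fin n → F, x ≠ 0 ∧ (∀ i, (x i) ^ q = x i) ∧ A.mulVec x = 0) ↔
      (∃ M : Matrix (Fin (n - 1)) (Fin (n - 1)) F,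
        IsUnit M ∧ A.map (fun e => e ^ q) = M * A) := by
  obtain ⟨φ, hφ⟩ := exists_frobenius_hom q hq F hF
  have hq2 : 2 ≤ q := hq.two_le
  have hq0 : q ≠ 0 := by omega
  have hpow : ∀ a : F, (a ^ q) ^ q = a := by
    intro a
    rw [← pow_mul]
    have : q * q = Fintype.card F := by rw [hF]; ring
    rw [this, FiniteField.pow_card]
  constructor
  · rintro ⟨x, hx0, hxfix, hAx⟩
    -- the functional y ↦ y ⬝ᵥ x
    set f : (Fin n → F) →ₗ[F] F :=
      { toFun := fun y => y ⬝ᵥ x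
        map_add' := fun a b => add_dotProduct a b x
        map_smul' := fun c a => smul_dotProduct c a x } with hf
    obtain ⟨j, hj⟩ : ∃ j, x j ≠ 0 := Function.ne_iff.mp hx0
    have hrange : LinearMap.range f = ⊤ := by
      rw [LinearMap.range_eq_top]
      intro c
      refine ⟨(c * (x j)⁻¹) • (Pi.single j 1 : Fin n → F), ?_⟩
      show ((c * (x j)⁻¹) • (Pi.single j 1 : Fin n → F)) ⬝ᵥ x = c
      rw [smul_dotProduct, single_dotProduct, one_mul, smul_eq_mul]
      field_simp
    have hkerf : finrank F (LinearMap.ker f) = n - 1 := by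
      have h1 := LinearMap.finrank_range_add_finrank_ker f
      rw [hrange] at h1
      simp [finrank_top] at h1
      omega
    have hrowle : Submodule.span F (Set.range A) ≤ LinearMap.ker f := by
      rw [Submodule.span_le]
      rintro _ ⟨i, rfl⟩
      simp only [SetLike.mem_coe, LinearMap.mem_ker]
      have := congrFun hAx i
      simpa [hf, Matrix.mulVec] using this
    have hrowrank : finrank F (Submodule.span F (Set.range A)) = n - 1 := by
      have := Matrix.rank_eq_finrank_span_cols Aᵀ
      rw [Matrix.rank_transpose, show Aᵀ.col = A from rfl, hrank] at this
      omega
    have hroweq : Submodule.span F (Set.range A) = LinearMap.ker f :=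
      Submodule.eq_of_le_of_finrank_le hrowle (by rw [hkerf, hrowrank])
    -- each row of A^(q) is in ker f = row space
    have hrows : ∀ i, (A.map (fun e => e ^ q)) i ∈ Submodule.span F (Set.range A) := by
      intro i
      rw [hroweq]
      simp only [LinearMap.mem_ker]
      have : ((A.map fun e => e ^ q) i) ⬝ᵥ x = φ (A i ⬝ᵥ x) := by
        simp only [dotProduct, Matrix.map_apply, map_sum]
        refine Finset.sum_congr rfl fun k _ => ?_
        rw [_root_.map_mul, hφ, hφ, hxfix k]
      have h2 : A i ⬝ᵥ x = 0 := by
        have := congrFun hAx i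
        simpa [Matrix.mulVec] using this
      simp only [hf]
      show ((A.map fun e => e ^ q) i) ⬝ᵥ x = 0
      rw [this, h2, map_zero]
    choose M hM using fun i => (Submodule.mem_span_range_iff_exists_fun F).mp (hrows i)
    have hMA : A.map (fun e => e ^ q) = Matrix.of M * A := by
      ext i j
      rw [Matrix.mul_apply]
      have := congrFun (hM i) j
      simpa [Finset.sum_apply] using this.symm
    -- rank of A^(q)
    have hrk : (A.map (fun e => e ^ q)).rank = n - 1 := by
      rw [rank_eq_iff_leftKernel]
      intro v hv
      have hvq : Matrix.vecMul (fun k => (v k) ^ q) A = 0 := by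
        funext j
        have := congrFun hv j
        simp only [Matrix.vecMul, dotProduct, Matrix.map_apply, Pi.zero_apply] at this ⊢
        have := congrArg φ this
        rw [map_sum, map_zero] at this
        rw [← this]
        refine Finset.sum_congr rfl fun k _ => ?_
        rw [_root_.map_mul, hφ, hφ, hpow]
      have := (rank_eq_iff_leftKernel A).mp hrank _ hvq
      funext k
      have hk := congrFun this k
      simp only [Pi.zero_apply] at hk ⊢
      exact pow_eq_zero_iff hq0 |>.mp hk
    refine ⟨Matrix.of M, ?_, hMA⟩
    rw [Matrix.isUnit_iff_isUnit_det, isUnit_iff_ne_zero]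
    intro hdet
    obtain ⟨v, hvne, hv⟩ := (Matrix.exists_vecMul_eq_zero_iff).mpr hdet
    have : Matrix.vecMul v (A.map (fun e => e ^ q)) = 0 := by
      rw [hMA, ← Matrix.vecMul_vecMul, hv, Matrix.zero_vecMul]
    exact hvne ((rank_eq_iff_leftKernel _).mp hrk v this)
  · rintro ⟨M, hM, hMA⟩
    -- kernel of A is 1-dimensional; get y
    have h1 := LinearMap.finrank_range_add_finrank_ker A.mulVecLin
    have h2 : finrank F (Fin n → F) = n := by simp
    have h3 : A.rank = finrank F (LinearMap.range A.mulVecLin) := rfl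
    rw [h2] at h1
    have hker1 : finrank F (LinearMap.ker A.mulVecLin) = 1 := by
      rw [hrank] at h3; omega
    have hkerne : LinearMap.ker A.mulVecLin ≠ ⊥ := by
      intro h
      rw [h] at hker1
      simp at hker1
    obtain ⟨y, hy, hyne⟩ := Submodule.ne_bot_iff _ |>.mp hkerne
    have hAy : A.mulVec y = 0 := hy
    have hkspan : LinearMap.ker A.mulVecLin = Submodule.span F {y} := by
      refine (Submodule.eq_of_le_of_finrank_le ?_ ?_).symm
      · rw [Submodule.span_le, Set.singleton_subset_iff]; exact hy
      · rw [hker1, finrank_span_singleton hyne]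
    -- y^q is also in the kernel
    have hAyq : A.mulVec (fun j => (y j) ^ q) = 0 := by
      have hq1 : (A.map (fun e => e ^ q)).mulVec y = 0 := by
        rw [hMA, ← Matrix.mulVec_mulVec, hAy, Matrix.mulVec_zero]
      funext i
      have := congrFun hq1 i
      simp only [Matrix.mulVec, dotProduct, Matrix.map_apply, Pi.zero_apply] at this ⊢
      have := congrArg φ this
      rw [map_sum, map_zero] at this
      rw [← this]
      refine Finset.sum_congr rfl fun k _ => ?_
      rw [_root_.map_mul, hφ, hφ, hpow]
    have : (fun j => (y j) ^ q) ∈ Submodule.span F ({y} : Set (Fin n → F)) := by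
      rw [← hkspan]; exact hAyq
    obtain ⟨c, hc⟩ := Submodule.mem_span_singleton.mp this
    have hcy : ∀ j, (y j) ^ q = c * y j := fun j => (congrFun hc j).symm
    obtain ⟨j, hj⟩ : ∃ j, y j ≠ 0 := Function.ne_iff.mp hyne
    have hc0 : c ≠ 0 := by
      intro h
      apply hj
      have := hcy j
      rw [h, zero_mul] at this
      exact pow_eq_zero_iff hq0 |>.mp this
    have hcnorm : c ^ q * c = 1 := by
      have h1 : ((y j) ^ q) ^ q = y j := hpow (y j)
      rw [hcy j, mul_pow, hcy j, ← mul_assoc] at h1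
      have h2 : c ^ q * c * y j = 1 * y j := by rw [one_mul]; exact h1
      exact mul_right_cancel₀ hj h2
    -- Hilbert 90 / counting: find λ with λ^(q-1) = c
    obtain ⟨lam, hlam0, hlamc⟩ : ∃ lam : F, lam ≠ 0 ∧ lam ^ (q - 1) = c := by
      classical
      obtain ⟨g, hg⟩ := IsCyclic.exists_generator (α := Fˣ)
      have horder : orderOf g = q ^ 2 - 1 := by
        rw [orderOf_eq_card_of_forall_mem_zpowers hg, Nat.card_eq_fintype_card,
          Fintype.card_units, hF]
      set u : Fˣ := Units.mk0 c hc0 with hu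
      obtain ⟨a, ha⟩ : ∃ a : ℕ, g ^ a = u := by
        have := hg u
        rwa [← mem_powers_iff_mem_zpowers, Submonoid.mem_powers_iff] at this
      have hu1 : u ^ (q + 1) = 1 := by
        ext
        push_cast
        rw [pow_succ]
        exact hcnorm
      have hdvd : orderOf g ∣ a * (q + 1) := by
        apply orderOf_dvd_of_pow_eq_one
        rw [pow_mul, ha, hu1]
      have hfact : q ^ 2 - 1 = (q - 1) * (q + 1) := by
        have h : (q - 1) * (q + 1) + 1 = q ^ 2 := by
          obtain ⟨t, rfl⟩ : ∃ t, q = t + 1 := ⟨q - 1, by omega⟩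
          simp [Nat.add_sub_cancel]
          ring
        omega
      rw [horder, hfact] at hdvd
      have hdvd2 : q - 1 ∣ a := by
        have := (Nat.mul_dvd_mul_iff_right (show 0 < q + 1 by omega)).mp hdvd
        exact this
      obtain ⟨b, hb⟩ := hdvd2
      refine ⟨((g ^ b : Fˣ) : F), Units.ne_zero _, ?_⟩
      rw [← Units.val_pow_eq_pow_val, ← pow_mul, mul_comm, ← hb, ha, hu]
      rfl
    -- construct x
    have hlamq : lam ^ q = c * lam := by
      have : q - 1 + 1 = q := by omega
      rw [← this, pow_succ, hlamc]
    refine ⟨fun i => lam⁻¹ * y i, ?_, ?_, ?_⟩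
    · intro h
      apply hj
      have := congrFun h j
      simp only [Pi.zero_apply] at this
      rcases mul_eq_zero.mp this with h' | h'
      · exact absurd h' (inv_ne_zero hlam0)
      · exact h'
    · intro i
      rw [mul_pow, inv_pow, hlamq, hcy i, mul_inv]
      field_simp
    · have : (fun i => lam⁻¹ * y i) = lam⁻¹ • y := by funext i; simp [Pi.smul_apply]
      rw [this, Matrix.mulVec_smul, hAy, smul_zero]
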